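/- arXiv:1611.08883 — 2 statements merged into one kernel-verified Lean document; each statement's English description precedes it below -/
import Mathlib

section
/- Let λ > 0 and T > 0. For all η ∈ ℝ with |η| ≥ π/T and all ξ ∈ ℝ³, one has (|ξ|² − η²)² + λ²η²|ξ|⁴ ≥ c for some constant c = c(λ, T) > 0; consequently the function m(η, ξ) = 1/(|ξ|² − η² + iλη|ξ|²) is bounded on the region {|η| ≥ π/T} × ℝ³. -/
noncomputable section

/-- For `λ, T > 0`, on the region `{|η| ≥ π/T} × ℝ³` the quantity
`(|ξ|² − η²)² + λ²η²|ξ|⁴` is bounded below by a positive constant `c = c(λ,T)`; consequently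
`m(η,ξ) = 1/(|ξ|² − η² + iλη|ξ|²)` is bounded there. -/
theorem stmt1 (lam T : ℝ) (hlam : 0 < lam) (hT : 0 < T) :
    ∃ c > 0, (∀ (η : ℝ) (ξ : EuclideanSpace ℝ (Fin 3)), Real.pi / T ≤ |η| →
        c ≤ (‖ξ‖ ^ 2 - η ^ 2) ^ 2 + lam ^ 2 * η ^ 2 * ‖ξ‖ ^ 4) ∧
      ∃ C : ℝ, ∀ (η : ℝ) (ξ : EuclideanSpace ℝ (Fin 3)), Real.pi / T ≤ |η| →
        ‖(1 / (((‖ξ‖ ^ 2 - η ^ 2 : ℝ) : ℂ) +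
          Complex.I * ((lam * η * ‖ξ‖ ^ 2 : ℝ) : ℂ)))‖ ≤ C := by
  have hπ : 0 < Real.pi / T := div_pos Real.pi_pos hT
  set a0 : ℝ := (Real.pi / T) ^ 2 with ha0def
  have ha0 : 0 < a0 := pow_pos hπ 2
  set c : ℝ := min (a0 ^ 2 / 4) (lam ^ 2 * a0 ^ 3 / 4) with hcdef
  have hc : 0 < c := lt_min (by positivity) (by positivity)
  have key : ∀ (η : ℝ) (ξ : EuclideanSpace ℝ (Fin 3)), Real.pi / T ≤ |η| →
      c ≤ (‖ξ‖ ^ 2 - η ^ 2) ^ 2 + lam ^ 2 * η ^ 2 * ‖ξ‖ ^ 4 := by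
    intro η ξ hη
    set x := ‖ξ‖ ^ 2 with hx
    have hx0 : 0 ≤ x := by positivity
    have ha : a0 ≤ η ^ 2 := by
      rw [ha0def, ← sq_abs η]
      exact pow_le_pow_left₀ hπ.le hη 2
    have h4 : ‖ξ‖ ^ 4 = x ^ 2 := by rw [hx]; ring
    rw [h4]
    rcases le_or_gt x (η ^ 2 / 2) with h | h
    · have h1 : a0 / 2 ≤ η ^ 2 - x := by linarith
      have h2 : (a0 / 2) ^ 2 ≤ (x - η ^ 2) ^ 2 := by nlinarith
      have h3 : 0 ≤ lam ^ 2 * η ^ 2 * x ^ 2 := by positivity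
      calc c ≤ a0 ^ 2 / 4 := min_le_left _ _
        _ ≤ (x - η ^ 2) ^ 2 + lam ^ 2 * η ^ 2 * x ^ 2 := by nlinarith
    · have h1 : a0 / 2 ≤ x := by linarith
      have h2 : (a0 / 2) ^ 2 ≤ x ^ 2 := by nlinarith
      have h3 : lam ^ 2 * a0 ^ 3 / 4 ≤ lam ^ 2 * η ^ 2 * x ^ 2 := by
        have h5 : a0 * (a0 / 2) ^ 2 ≤ η ^ 2 * x ^ 2 :=
          mul_le_mul ha h2 (by positivity) (by positivity)
        nlinarith [sq_nonneg lam]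
      calc c ≤ lam ^ 2 * a0 ^ 3 / 4 := min_le_right _ _
        _ ≤ (x - η ^ 2) ^ 2 + lam ^ 2 * η ^ 2 * x ^ 2 := by nlinarith [sq_nonneg (x - η ^ 2)]
  refine ⟨c, hc, key, 1 / Real.sqrt c, ?_⟩
  intro η ξ hη
  set z : ℂ := ((‖ξ‖ ^ 2 - η ^ 2 : ℝ) : ℂ) + Complex.I * ((lam * η * ‖ξ‖ ^ 2 : ℝ) : ℂ) with hz
  have hns : Complex.normSq z = (‖ξ‖ ^ 2 - η ^ 2) ^ 2 + lam ^ 2 * η ^ 2 * ‖ξ‖ ^ 4 := by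
    simp only [hz, Complex.normSq_apply, Complex.add_re, Complex.add_im, Complex.mul_re,
      Complex.mul_im, Complex.I_re, Complex.I_im, Complex.ofReal_re, Complex.ofReal_im]
    ring
  have hle : c ≤ Complex.normSq z := hns ▸ key η ξ hη
  have hsq : Real.sqrt c ≤ ‖z‖ := by
    rw [Complex.norm_def]
    exact Real.sqrt_le_sqrt hle
  have hcs : 0 < Real.sqrt c := Real.sqrt_pos.mpr hc
  rw [norm_div, norm_one]
  exact one_div_le_one_div_of_le hcs hsq
end
end

section
/- Let f : 𝕋 × ℝ³₊ → ℝ and define the even extension f̃(t, x′, x₃) = f(t, x′, |x₃|). If ũ is the unique purely periodic solution in 𝒮′ of ∂ₜ²ũ − Δũ − λ∂ₜΔũ = f̃ on 𝕋 × ℝ³, then ũ(t, x′, x₃) = ũ(t, x′, −x₃); in particular, if ũ is C¹ in x, ∂₃ũ vanishes on {x₃ = 0}. -/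
noncomputable section

open MeasureTheory

abbrev E3 := EuclideanSpace ℝ (Fin 3)

/-- Spatial partial derivative `∂ᵢ f`. -/
def Dx (f : E3 → ℝ) (i : Fin 3) (x : E3) : ℝ :=
  fderiv ℝ f x (EuclideanSpace.single i 1)

/-- Laplacian `Δf`. -/
def lapx (f : E3 → ℝ) (x : E3) : ℝ :=
  ∑ i : Fin 3, fderiv ℝ (fun y => Dx f i y) x (EuclideanSpace.single i 1)

/-- Time derivative `∂ₜ u`. -/
def dt (u : ℝ → E3 → ℝ) : ℝ → E3 → ℝ := fun t x => deriv (fun s => u s x) t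

/-- The damped wave operator `∂ₜ² − Δ − λ∂ₜΔ`. -/
def dwOp (lam : ℝ) (u : ℝ → E3 → ℝ) : ℝ → E3 → ℝ :=
  fun t x => dt (dt u) t x - lapx (u t) x - lam * dt (fun s y => lapx (u s) y) t x

/-- Reflection in the plane `{x₃ = 0}`. -/
def refl3 (x : E3) : E3 := WithLp.toLp 2 ![x 0, x 1, -(x 2)]

/-- Even extension `f̃(t,x′,x₃) = f(t,x′,|x₃|)` of a function given on the half-space. -/
def evenExt (f : ℝ → E3 → ℝ) : ℝ → E3 → ℝ :=
  fun t x => f t (WithLp.toLp 2 ![x 0, x 1, |x 2|])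

/-- A purely periodic (tempered, here: smooth with polynomial growth) solution of the
time-periodic damped wave equation with right-hand side `F`. -/
def GoodSol (lam T : ℝ) (F w : ℝ → E3 → ℝ) : Prop :=
  ContDiff ℝ (⊤ : ℕ∞) (Function.uncurry w) ∧
  (∀ t x, w (t + T) x = w t x) ∧
  (∀ x, (∫ s in (0 : ℝ)..T, w s x) = 0) ∧
  (∃ (C : ℝ) (m : ℕ), ∀ t x, |w t x| ≤ C * (1 + ‖x‖) ^ m) ∧
  (∀ t x, dwOp lam w t x = F t x)

/-- The reflection as a continuous linear map. -/
def reflL : E3 →L[ℝ] E3 :=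
  LinearMap.toContinuousLinearMap
    { toFun := refl3
      map_add' := by
        intro x y; ext i; fin_cases i <;>
          first | (simp [refl3, PiLp.add_apply]; ring) | simp [refl3, PiLp.add_apply]
      map_smul' := by
        intro c x; ext i; fin_cases i <;>
          first | (simp [refl3, PiLp.smul_apply]; ring) | simp [refl3, PiLp.smul_apply, mul_comm] }

lemma reflL_apply (x : E3) : reflL x = refl3 x := rfl

lemma reflL_single (i : Fin 3) :
    reflL (EuclideanSpace.single i 1) = (![1,1,-1] : Fin 3 → ℝ) i • EuclideanSpace.single i 1 := by
  fin_cases i <;> (ext j; fin_cases j <;>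
    simp [reflL_apply, refl3, EuclideanSpace.single_apply, PiLp.smul_apply])

lemma norm_reflL (x : E3) : ‖reflL x‖ = ‖x‖ := by
  rw [EuclideanSpace.norm_eq, EuclideanSpace.norm_eq]
  congr 1
  simp [Fin.sum_univ_three, reflL_apply, refl3]

lemma fderiv_comp_reflL (g : E3 → ℝ) (x : E3) (hg : DifferentiableAt ℝ g (reflL x)) :
    fderiv ℝ (fun y => g (reflL y)) x = (fderiv ℝ g (reflL x)).comp reflL := by
  rw [show (fun y => g (reflL y)) = g ∘ reflL from rfl,
    fderiv_comp x hg reflL.differentiableAt, reflL.fderiv]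

lemma Dx_comp_reflL (g : E3 → ℝ) (hg : Differentiable ℝ g) (i : Fin 3) (x : E3) :
    Dx (fun y => g (reflL y)) i x = (![1,1,-1] : Fin 3 → ℝ) i * Dx g i (reflL x) := by
  rw [Dx, fderiv_comp_reflL g x (hg _)]
  simp [Dx, reflL_single, _root_.map_smul, smul_eq_mul]

lemma lapx_comp_reflL (g : E3 → ℝ) (hg : ContDiff ℝ (⊤ : ℕ∞) g) (x : E3) :
    lapx (fun y => g (reflL y)) x = lapx g (reflL x) := by
  have hDg : ∀ i : Fin 3, ContDiff ℝ (⊤ : ℕ∞) (fun y => Dx g i y) := fun i =>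
    (hg.fderiv_right (by simp)).clm_apply contDiff_const
  unfold lapx
  refine Finset.sum_congr rfl fun i _ => ?_
  have h1 : (fun y => Dx (fun z => g (reflL z)) i y)
      = fun y => (![1,1,-1] : Fin 3 → ℝ) i * Dx g i (reflL y) :=
    funext fun y => Dx_comp_reflL g (hg.differentiable (by simp)) i y
  rw [h1]
  have hD : DifferentiableAt ℝ (fun y => Dx g i (reflL y)) x :=
    ((hDg i).differentiable (by simp) (reflL x)).comp x reflL.differentiableAt
  rw [fderiv_const_mul hD, fderiv_comp_reflL _ x ((hDg i).differentiable (by simp) _)]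
  have hc : (![1,1,-1] : Fin 3 → ℝ) i * (![1,1,-1] : Fin 3 → ℝ) i = 1 := by
    fin_cases i <;> norm_num
  simp only [ContinuousLinearMap.smul_apply, ContinuousLinearMap.coe_comp', Function.comp_apply,
    reflL_single, _root_.map_smul, smul_eq_mul]
  rw [← mul_assoc, hc, one_mul]

lemma dwOp_comp_reflL (lam : ℝ) (u : ℝ → E3 → ℝ)
    (hu : ContDiff ℝ (⊤ : ℕ∞) (Function.uncurry u)) (t : ℝ) (x : E3) :
    dwOp lam (fun s y => u s (reflL y)) t x = dwOp lam u t (reflL x) := by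
  have hut : ∀ s, ContDiff ℝ (⊤ : ℕ∞) (u s) := fun s =>
    hu.comp (contDiff_const.prodMk contDiff_id)
  have hlap : ∀ s y, lapx (fun z => u s (reflL z)) y = lapx (u s) (reflL y) :=
    fun s y => lapx_comp_reflL (u s) (hut s) y
  unfold dwOp
  congr 1
  · congr 1
    rw [lapx_comp_reflL (u t) (hut t) x]
  · congr 1
    unfold dt
    have : (fun s => lapx (fun z => u s (reflL z)) x) = fun s => lapx (u s) (reflL x) :=
      funext fun s => hlap s x
    rw [this]

lemma evenExt_reflL (f : ℝ → E3 → ℝ) (t : ℝ) (x : E3) :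
    evenExt f t (reflL x) = evenExt f t x := by
  unfold evenExt
  congr 1
  ext i
  fin_cases i <;> simp [reflL_apply, refl3]

/-- If `ũ` is the unique purely periodic solution of
`∂ₜ²ũ − Δũ − λ∂ₜΔũ = f̃` on `𝕋 × ℝ³`, where `f̃` is the even extension of `f`, then
`ũ(t,x′,x₃) = ũ(t,x′,−x₃)`; in particular (as `ũ` is `C¹` in `x`) `∂₃ũ` vanishes on
`{x₃ = 0}`. -/
theorem stmt11 (lam T : ℝ) (hlam : 0 < lam) (hT : 0 < T) (f : ℝ → E3 → ℝ)
    (util : ℝ → E3 → ℝ) (hsol : GoodSol lam T (evenExt f) util)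
    (huniq : ∀ w, GoodSol lam T (evenExt f) w → w = util) :
    ∀ (t : ℝ) (x : E3), util t x = util t (refl3 x) ∧
      (x 2 = 0 → Dx (util t) 2 x = 0) := by
  obtain ⟨hu, hper, havg, ⟨C, m, hbd⟩, heq⟩ := hsol
  set w : ℝ → E3 → ℝ := fun t x => util t (reflL x) with hw
  have hwsol : GoodSol lam T (evenExt f) w := by
    refine ⟨?_, ?_, ?_, ⟨C, m, ?_⟩, ?_⟩
    · exact hu.comp (contDiff_fst.prodMk (reflL.contDiff.comp contDiff_snd))
    · intro t x; exact hper t (reflL x)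
    · intro x; exact havg (reflL x)
    · intro t x; rw [← norm_reflL x]; exact hbd t (reflL x)
    · intro t x
      rw [show dwOp lam w t x = dwOp lam (fun s y => util s (reflL y)) t x from rfl,
        dwOp_comp_reflL lam util hu t x, heq t (reflL x), evenExt_reflL]
  have hww := huniq w hwsol
  have hsym : ∀ t x, util t (reflL x) = util t x := by
    intro t x
    conv_rhs => rw [← hww]
  intro t x
  constructor
  · rw [← reflL_apply, hsym t x]
  · intro hx2
    have hxr : reflL x = x := by
      ext i
      fin_cases i <;> simp [reflL_apply, refl3, hx2]
    have hut : ContDiff ℝ (⊤ : ℕ∞) (util t) :=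
      hu.comp (contDiff_const.prodMk contDiff_id)
    have hgeq : (fun y => util t (reflL y)) = util t := funext fun y => hsym t y
    have h1 : fderiv ℝ (util t) x = (fderiv ℝ (util t) (reflL x)).comp reflL := by
      rw [← fderiv_comp_reflL (util t) x (hut.differentiable (by simp) _), hgeq]
    have h2 : Dx (util t) 2 x = - Dx (util t) 2 x := by
      unfold Dx
      conv_lhs => rw [h1]
      rw [hxr]
      simp [reflL_single, _root_.map_smul]
    linarith
end
end
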